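/- Suppose ψ : [-1,1] → ℝ is continuous with ∫_{-1}^1 ψ dx = 0, ψ takes both positive and negative values, and there exist ξ_- ≤ ξ_+ in [-1,1] such that ψ < 0 on (ξ_-, ξ_+) and ψ > 0 on [-1,1] \ [ξ_-, ξ_+]. If additionally ∫_{-1}^1 x ψ(x) dx = 0, then ξ_- and ξ_+ are both interior points of (-1,1), i.e. ψ changes sign exactly twice, and ψ(1) > 0 and ψ(-1) > 0. -/

import Mathlib

open Set intervalIntegral

open MeasureTheory in
lemma aux_integral_pos (f : ℝ → ℝ) (hf : ContinuousOn f (Icc (-1:ℝ) 1))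
    (h0 : ∀ x ∈ Ioo (-1:ℝ) 1, 0 ≤ f x) {c : ℝ} (hc : c ∈ Ioo (-1:ℝ) 1) (hfc : 0 < f c) :
    0 < ∫ x in (-1:ℝ)..1, f x := by
  have hint : IntervalIntegrable f volume (-1) 1 :=
    (hf.mono (by rw [uIcc_of_le (by norm_num : (-1:ℝ) ≤ 1)])).intervalIntegrable
  have hae : 0 ≤ᵐ[volume.restrict (uIoc (-1:ℝ) 1)] f := by
    rw [show uIoc (-1:ℝ) 1 = Ioc (-1:ℝ) 1 from uIoc_of_le (by norm_num)]
    refine ae_restrict_of_ae_eq_of_ae_restrict Ioo_ae_eq_Ioc ?_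
    rw [ae_restrict_iff' measurableSet_Ioo]
    filter_upwards with x hx using h0 x hx
  rw [integral_pos_iff_support_of_nonneg_ae' hae hint]
  refine ⟨by norm_num, ?_⟩
  have hca : ContinuousAt f c := hf.continuousAt (Icc_mem_nhds hc.1 hc.2)
  have hnb : f ⁻¹' (Ioi 0) ∩ Ioo (-1:ℝ) 1 ∈ nhds c :=
    Filter.inter_mem (hca.preimage_mem_nhds (Ioi_mem_nhds hfc)) (Ioo_mem_nhds hc.1 hc.2)
  obtain ⟨ε, hε, hball⟩ := Metric.mem_nhds_iff.mp hnb
  have hsub : Ioo (c - ε) (c + ε) ⊆ Function.support f ∩ Ioc (-1:ℝ) 1 := by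
    intro x hx
    have hx' : x ∈ f ⁻¹' (Ioi 0) ∩ Ioo (-1:ℝ) 1 := hball (by rwa [Real.ball_eq_Ioo])
    exact ⟨ne_of_gt hx'.1, Ioo_subset_Ioc_self hx'.2⟩
  exact lt_of_lt_of_le ((MeasureTheory.Measure.measure_Ioo_pos _).mpr (by linarith))
    (MeasureTheory.measure_mono hsub)

theorem two_interior_zeros
    (ψ : ℝ → ℝ) (hψc : ContinuousOn ψ (Icc (-1:ℝ) 1))
    (hmean : ∫ x in (-1:ℝ)..1, ψ x = 0)
    (hposval : ∃ x ∈ Icc (-1:ℝ) 1, 0 < ψ x)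
    (hnegval : ∃ x ∈ Icc (-1:ℝ) 1, ψ x < 0)
    (ξm ξp : ℝ) (hξm : ξm ∈ Icc (-1:ℝ) 1) (hξp : ξp ∈ Icc (-1:ℝ) 1)
    (hle : ξm ≤ ξp)
    (hneg : ∀ x ∈ Ioo ξm ξp, ψ x < 0)
    (hpos : ∀ x ∈ Icc (-1:ℝ) 1 \ Icc ξm ξp, 0 < ψ x)
    (hfirst : ∫ x in (-1:ℝ)..1, x * ψ x = 0) :
    ξm ∈ Ioo (-1:ℝ) 1 ∧ ξp ∈ Ioo (-1:ℝ) 1 ∧ 0 < ψ 1 ∧ 0 < ψ (-1) := by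
  have huIcc : uIcc (-1:ℝ) 1 = Icc (-1:ℝ) 1 := uIcc_of_le (by norm_num)
  have hψi : IntervalIntegrable ψ MeasureTheory.volume (-1) 1 :=
    (hψc.mono (by rw [huIcc])).intervalIntegrable
  have hxψi : IntervalIntegrable (fun x => x * ψ x) MeasureTheory.volume (-1) 1 :=
    ((continuousOn_id.mul (hψc.mono (by rw [huIcc]))) :
      ContinuousOn (fun x => x * ψ x) (uIcc (-1:ℝ) 1)).intervalIntegrable
  -- First: ξm > -1
  have hm : -1 < ξm := by
    by_contra h
    have hξm1 : ξm = -1 := le_antisymm (not_lt.mp h) hξm.1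
    have hI : ∫ x in (-1:ℝ)..1, (x - ξp) * ψ x = 0 := by
      have : ∀ x : ℝ, (x - ξp) * ψ x = x * ψ x - ξp * ψ x := by intro x; ring
      simp_rw [this]
      rw [intervalIntegral.integral_sub hxψi (hψi.const_mul ξp),
        intervalIntegral.integral_const_mul, hmean, hfirst]
      ring
    have h0 : ∀ x ∈ Ioo (-1:ℝ) 1, 0 ≤ (x - ξp) * ψ x := by
      intro x hx
      rcases lt_trichotomy x ξp with h1 | h1 | h1
      · have := hneg x ⟨hξm1 ▸ hx.1, h1⟩
        nlinarith
      · simp [h1]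
      · have := hpos x ⟨⟨hx.1.le, hx.2.le⟩, fun hh => absurd hh.2 (not_le.mpr h1)⟩
        nlinarith
    rcases lt_or_eq_of_le hξp.2 with h1 | h1
    · set c := (ξp + 1) / 2 with hcdef
      have hcI : c ∈ Ioo (-1:ℝ) 1 := by
        constructor <;> [nlinarith [hξp.1]; nlinarith]
      have hcψ : 0 < ψ c := hpos c ⟨⟨hcI.1.le, hcI.2.le⟩,
        fun hh => absurd hh.2 (by simp only [hcdef]; push_neg; linarith)⟩
      have := aux_integral_pos (fun x => (x - ξp) * ψ x) ((continuousOn_id.sub continuousOn_const).mul hψc) h0 hcI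
        (by show 0 < (c - ξp) * ψ c; nlinarith)
      linarith [hI ▸ this]
    · have h0I : (0:ℝ) ∈ Ioo (-1:ℝ) 1 := by norm_num
      have hcψ : ψ 0 < 0 := hneg 0 ⟨by rw [hξm1]; norm_num, by rw [h1]; norm_num⟩
      have := aux_integral_pos (fun x => (x - ξp) * ψ x) ((continuousOn_id.sub continuousOn_const).mul hψc) h0 h0I
        (by show 0 < (0 - ξp) * ψ 0; rw [h1]; nlinarith)
      linarith [hI ▸ this]
  -- Second: ξp < 1
  have hp : ξp < 1 := by
    by_contra h
    have hξp1 : ξp = 1 := le_antisymm hξp.2 (not_lt.mp h)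
    have hI : ∫ x in (-1:ℝ)..1, (ξm - x) * ψ x = 0 := by
      have : ∀ x : ℝ, (ξm - x) * ψ x = ξm * ψ x - x * ψ x := by intro x; ring
      simp_rw [this]
      rw [intervalIntegral.integral_sub (hψi.const_mul ξm) hxψi,
        intervalIntegral.integral_const_mul, hmean, hfirst]
      ring
    have h0 : ∀ x ∈ Ioo (-1:ℝ) 1, 0 ≤ (ξm - x) * ψ x := by
      intro x hx
      rcases lt_trichotomy x ξm with h1 | h1 | h1
      · have := hpos x ⟨⟨hx.1.le, hx.2.le⟩, fun hh => absurd hh.1 (not_le.mpr h1)⟩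
        nlinarith
      · simp [h1]
      · have := hneg x ⟨h1, hξp1 ▸ hx.2⟩
        nlinarith
    set c := (ξm - 1) / 2 with hcdef
    have hcI : c ∈ Ioo (-1:ℝ) 1 := by
      constructor <;> [nlinarith; nlinarith [hξm.2]]
    have hcψ : 0 < ψ c := hpos c ⟨⟨hcI.1.le, hcI.2.le⟩,
      fun hh => absurd hh.1 (by simp only [hcdef]; push_neg; linarith)⟩
    have := aux_integral_pos (fun x => (ξm - x) * ψ x) ((continuousOn_const.sub continuousOn_id).mul hψc) h0 hcI
      (by show 0 < (ξm - c) * ψ c; nlinarith)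
    linarith [hI ▸ this]
  refine ⟨⟨hm, lt_of_le_of_lt hle hp⟩, ⟨lt_of_lt_of_le hm hle, hp⟩, ?_, ?_⟩
  · exact hpos 1 ⟨⟨by norm_num, le_refl 1⟩, fun hh => absurd hh.2 (not_le.mpr hp)⟩
  · exact hpos (-1) ⟨⟨le_refl _, by norm_num⟩, fun hh => absurd hh.1 (not_le.mpr hm)⟩
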